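/- Let A(τ) = -(1/2)·log(σ₀² + Δ(τ)) with Δ as in the structural break model and A(τ₀) = -(1/2)·log(σ₀²). Then for any compact subinterval [a,b] ⊂ (0,1) containing τ₀ in its interior, there exist constants B₁ < 0 and B₂ < 0 such that for all τ ∈ [a,b], B₂·|τ - τ₀| < A(τ) - A(τ₀) < B₁·|τ - τ₀| when τ ≠ τ₀ (equivalently, A(τ) - A(τ₀) is bounded above and below by negative constant multiples of |τ - τ₀|). -/

import Mathlib

open Set

theorem stmt4 (σ0sq c τ0 : ℝ) (hσ : 0 < σ0sq) (hc : 0 < c)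
    (hτ0 : τ0 ∈ Ioo (0:ℝ) 1)
    (Δ : ℝ → ℝ)
    (hΔ : ∀ τ ∈ Ioo (0:ℝ) 1,
      Δ τ = if τ ≤ τ0 then (τ0 - τ) * ((1 - τ0) / (1 - τ)) * c
            else (τ - τ0) * (τ0 / τ) * c)
    (A : ℝ → ℝ)
    (hA : ∀ τ, A τ = -(1/2) * Real.log (σ0sq + Δ τ))
    (a b : ℝ) (ha : 0 < a) (hb : b < 1) (hab : a ≤ b)
    (hτ0ab : τ0 ∈ Ioo a b) :
    ∃ B₁ < (0:ℝ), ∃ B₂ < (0:ℝ), ∀ τ ∈ Icc a b, τ ≠ τ0 →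
      B₂ * |τ - τ0| < A τ - A τ0 ∧ A τ - A τ0 < B₁ * |τ - τ0| := by
  obtain ⟨h0τ0, hτ01⟩ := hτ0
  obtain ⟨hτ0a, hτ0b⟩ := hτ0ab
  set m := c * min (1 - τ0) τ0 with hmdef
  set M := c * max ((1 - τ0) / (1 - b)) (τ0 / a) with hMdef
  have hb1 : (0:ℝ) < 1 - b := by linarith
  have hm0 : 0 < m := mul_pos hc (lt_min (by linarith) h0τ0)
  have hM0 : 0 < M := mul_pos hc (lt_max_of_lt_left (div_pos (by linarith) hb1))
  have hΔτ0 : Δ τ0 = 0 := by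
    rw [hΔ τ0 ⟨h0τ0, hτ01⟩]; simp
  have key : ∀ τ ∈ Icc a b, m * |τ - τ0| ≤ Δ τ ∧ Δ τ ≤ M * |τ - τ0| := by
    rintro τ ⟨haτ, hτb⟩
    rw [hΔ τ ⟨by linarith, by linarith⟩]
    by_cases h : τ ≤ τ0
    · rw [abs_of_nonpos (by linarith), if_pos h]
      have h1 : (0:ℝ) < 1 - τ := by linarith
      have hr1 : 1 - τ0 ≤ (1 - τ0) / (1 - τ) := by
        rw [le_div_iff₀ h1]; nlinarith
      have hr2 : (1 - τ0) / (1 - τ) ≤ (1 - τ0) / (1 - b) := by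
        gcongr <;> linarith
      have hmin : min (1 - τ0) τ0 ≤ 1 - τ0 := min_le_left _ _
      have hmax : (1 - τ0) / (1 - b) ≤ max ((1 - τ0) / (1 - b)) (τ0 / a) :=
        le_max_left _ _
      have ht : 0 ≤ τ0 - τ := by linarith
      constructor
      · rw [hmdef]
        nlinarith [mul_le_mul_of_nonneg_right
          (mul_le_mul_of_nonneg_left (hmin.trans hr1) hc.le) ht]
      · rw [hMdef]
        nlinarith [mul_le_mul_of_nonneg_right
          (mul_le_mul_of_nonneg_left (hr2.trans hmax) hc.le) ht]
    · push_neg at h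
      rw [abs_of_pos (by linarith), if_neg (not_le.mpr h)]
      have h1 : (0:ℝ) < τ := by linarith
      have hr1 : τ0 ≤ τ0 / τ := by
        rw [le_div_iff₀ h1]; nlinarith
      have hr2 : τ0 / τ ≤ τ0 / a := by gcongr <;> linarith
      have hmin : min (1 - τ0) τ0 ≤ τ0 := min_le_right _ _
      have hmax : τ0 / a ≤ max ((1 - τ0) / (1 - b)) (τ0 / a) := le_max_right _ _
      have ht : 0 ≤ τ - τ0 := by linarith
      constructor
      · rw [hmdef]
        nlinarith [mul_le_mul_of_nonneg_right
          (mul_le_mul_of_nonneg_left (hmin.trans hr1) hc.le) ht]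
      · rw [hMdef]
        nlinarith [mul_le_mul_of_nonneg_right
          (mul_le_mul_of_nonneg_left (hr2.trans hmax) hc.le) ht]
  have hB1 : -(m / (σ0sq + M)) / 4 < 0 := by
    have : 0 < m / (σ0sq + M) := by positivity
    linarith
  have hB2 : -(M / σ0sq) / 2 - 1 < 0 := by
    have : 0 < M / σ0sq := by positivity
    linarith
  clear_value m M
  refine ⟨-(m / (σ0sq + M)) / 4, hB1, -(M / σ0sq) / 2 - 1, hB2, ?_⟩
  rintro τ hτ hne
  have hd : 0 < |τ - τ0| := abs_pos.mpr (sub_ne_zero.mpr hne)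
  obtain ⟨hk1, hk2⟩ := key τ hτ
  obtain ⟨haτ, hτb⟩ := hτ
  have hd1 : |τ - τ0| ≤ 1 := by
    rw [abs_le]; constructor <;> linarith
  have hΔpos : 0 < Δ τ := lt_of_lt_of_le (by positivity) hk1
  have hs : 0 < σ0sq + Δ τ := by linarith
  have hΔM : Δ τ ≤ M := by nlinarith
  set L := Real.log (σ0sq + Δ τ) - Real.log σ0sq with hLdef
  have hup : L ≤ Δ τ / σ0sq := by
    have h := Real.log_le_sub_one_of_pos (show 0 < (σ0sq + Δ τ) / σ0sq by positivity)
    rw [Real.log_div (ne_of_gt hs) (ne_of_gt hσ)] at h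
    have he : (σ0sq + Δ τ) / σ0sq - 1 = Δ τ / σ0sq := by field_simp; ring
    rw [he] at h
    exact h
  have hlo : Δ τ / (σ0sq + Δ τ) ≤ L := by
    have h := Real.log_le_sub_one_of_pos (show 0 < σ0sq / (σ0sq + Δ τ) by positivity)
    rw [Real.log_div (ne_of_gt hσ) (ne_of_gt hs)] at h
    have he : σ0sq / (σ0sq + Δ τ) - 1 = -(Δ τ / (σ0sq + Δ τ)) := by field_simp; ring
    rw [he] at h
    linarith
  have hAdiff : A τ - A τ0 = -(1/2) * L := by
    rw [hA τ, hA τ0, hΔτ0, add_zero, hLdef]; ring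
  have hL2 : L ≤ (M / σ0sq) * |τ - τ0| := by
    calc L ≤ Δ τ / σ0sq := hup
      _ ≤ M * |τ - τ0| / σ0sq := by gcongr
      _ = (M / σ0sq) * |τ - τ0| := by ring
  have hL3 : (m / (σ0sq + M)) * |τ - τ0| ≤ L := by
    calc (m / (σ0sq + M)) * |τ - τ0| = m * |τ - τ0| / (σ0sq + M) := by ring
      _ ≤ Δ τ / (σ0sq + Δ τ) := by
          apply div_le_div₀ (le_of_lt hΔpos) hk1 (by linarith) (by linarith)
      _ ≤ L := hlo
  constructor
  · rw [hAdiff]; linarith [hL2, hd]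
  · rw [hAdiff]
    have hpd : 0 < (m / (σ0sq + M)) * |τ - τ0| := by positivity
    linarith [hL3, hpd]
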